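/- arXiv:2001.04598 — 2 statements merged into one kernel-verified Lean document; each statement's English description precedes it below -/
import Mathlib

section
/- Let $(\delta, T)$ be a sequential hypothesis test such that $P_0(T<\infty) = P_1(T<\infty) = 1$. Then for any event $E \in \mathcal{F}_T$ and any $\gamma > 0$, $P_0(E) - \gamma P_1(E) \le P_0(S_T \ge \log \gamma)$, where $S_T = \sum_{k=1}^T \log(p_0(X_k)/p_1(X_k))$. -/
open MeasureTheory ProbabilityTheory Real
open scoped ENNReal NNReal

noncomputable section

/-- Sample space: infinite sequences of real observations. -/
abbrev SeqSp : Type := ℕ → ℝ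

/-- Log-likelihood ratio partial sum `S_n`. -/
def llrSum (p0 p1 : ℝ → ℝ) (n : ℕ) (ω : SeqSp) : ℝ :=
  ∑ k ∈ Finset.range n, Real.log (p0 (ω k) / p1 (ω k))

/-- The natural filtration generated by the first `n` coordinates. -/
def natFilt (n : ℕ) : MeasurableSpace SeqSp :=
  ⨆ k ∈ Finset.range n, MeasurableSpace.comap (fun ω : SeqSp => ω k) inferInstance

/-- `T` is a stopping time for the natural filtration. -/
def IsStopTime (T : SeqSp → ℕ∞) : Prop :=
  ∀ n : ℕ, MeasurableSet[natFilt n] {ω | T ω ≤ (n : ℕ∞)}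

/-- `E` belongs to the stopped σ-algebra `𝓕_T`. -/
def InStoppedSigma (T : SeqSp → ℕ∞) (E : Set SeqSp) : Prop :=
  ∀ n : ℕ, MeasurableSet[natFilt n] (E ∩ {ω | T ω ≤ (n : ℕ∞)})

/-- The stopped log-likelihood ratio `S_T`. -/
def stoppedLLR (p0 p1 : ℝ → ℝ) (T : SeqSp → ℕ∞) (ω : SeqSp) : ℝ :=
  llrSum p0 p1 (T ω).toNat ω

/-- The coordinates are i.i.d. with common law `P` under `μ`. -/
def IsIIDwithLaw (μ : Measure SeqSp) (P : Measure ℝ) : Prop :=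
  iIndepFun (fun k (ω : SeqSp) => ω k) μ ∧
    ∀ k : ℕ, μ.map (fun ω : SeqSp => ω k) = P

/-- The SPRT stopping time with thresholds `(α, β)`. -/
def sprtTime (p0 p1 : ℝ → ℝ) (α β : ℝ) (ω : SeqSp) : ℕ∞ :=
  ⨅ (k : ℕ) (_ : 1 ≤ k ∧ llrSum p0 p1 k ω ∉ Set.Icc (-α) β), (k : ℕ∞)

/-- Standard Gaussian CDF `Φ`. -/
def stdGaussCDF (a : ℝ) : ℝ := (gaussianReal 0 1 (Set.Iic a)).toReal

namespace Stmt1Aux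

variable {X : Type*} [MeasurableSpace X]

/-- Key "inner-regular" change of measure inequality, valid for possibly non-measurable
densities. -/
theorem wd_le_of_ratio (β : Measure X) [SigmaFinite β]
    (f0 f1 : X → ℝ≥0∞) (hf0fin : ∀ x, f0 x ≠ ∞)
    [IsFiniteMeasure (β.withDensity f1)]
    (hac : β.withDensity f0 ≪ β.withDensity f1)
    {t : ℝ≥0∞} (ht0 : t ≠ 0) (htop : t ≠ ∞) {s : Set X} (hs : MeasurableSet s)
    (hsub : ∀ x ∈ s, f0 x ≤ t * f1 x ∨ f1 x = 0) :
    β.withDensity f0 s ≤ t * β.withDensity f1 s := by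
  set μ1 := β.withDensity f1 with hμ1
  -- the zero set of `f1` has outer measure zero under `μ1`
  have hz : μ1 {x | f1 x = 0} = 0 := by
    refine le_antisymm ?_ (zero_le)
    refine ENNReal.le_of_forall_pos_le_add fun ε hε _ => ?_
    simp only [zero_add]
    have huniv : μ1 Set.univ = ∫⁻ x, f1 x ∂β := by
      rw [hμ1, withDensity_apply _ MeasurableSet.univ, Measure.restrict_univ]
    rcases le_or_gt (μ1 Set.univ) (ε : ℝ≥0∞) with h | h
    · exact le_trans (measure_mono (Set.subset_univ _)) h
    · have hne0 : μ1 Set.univ ≠ 0 := fun h0 => by simp [h0] at h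
      have hlt : μ1 Set.univ - ε < μ1 Set.univ :=
        ENNReal.sub_lt_self (measure_ne_top _ _) hne0 (by exact_mod_cast hε.ne')
      conv_rhs at hlt => rw [huniv, lintegral_def]
      obtain ⟨φ, hlt⟩ := lt_iSup_iff.mp hlt
      obtain ⟨hφle, hφlt⟩ := lt_iSup_iff.mp hlt
      have hφint : φ.lintegral β = ∫⁻ x, φ x ∂β := (φ.lintegral_eq_lintegral β).symm
      set S := {x | φ x ≠ 0} with hSdef
      have hSmeas : MeasurableSet S := φ.measurable (measurableSet_singleton 0).compl
      have hφeq : S.indicator (⇑φ) = ⇑φ := by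
        funext x
        by_cases hx : φ x = 0
        · by_cases hxS : x ∈ S
          · rw [Set.indicator_of_mem hxS]
          · rw [Set.indicator_of_notMem hxS, hx]
        · rw [Set.indicator_of_mem (by exact hx)]
      have hS1 : ∫⁻ x, φ x ∂β ≤ μ1 S := by
        rw [hμ1, withDensity_apply _ hSmeas, ← hφeq, lintegral_indicator hSmeas]
        exact lintegral_mono fun x => hφle x
      have hφne : φ.lintegral β ≠ ∞ := by
        rw [hφint]
        exact (lt_of_le_of_lt hS1 (measure_lt_top _ _)).ne
      have h1 : μ1 Set.univ ≤ φ.lintegral β + ε :=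
        ((ENNReal.sub_lt_iff_lt_right (by simp) h.le).mp hφlt).le
      have hsub' : {x | f1 x = 0} ⊆ Sᶜ := by
        intro x hx
        simp only [Set.mem_compl_iff, hSdef, Set.mem_setOf_eq, not_not]
        exact le_antisymm (hx ▸ hφle x) (zero_le)
      calc μ1 {x | f1 x = 0} ≤ μ1 Sᶜ := measure_mono hsub'
        _ = μ1 Set.univ - μ1 S := measure_compl hSmeas (measure_ne_top _ _)
        _ ≤ (φ.lintegral β + ε) - φ.lintegral β :=
            tsub_le_tsub h1 (hφint ▸ hS1)
        _ = ε := by rw [add_comm, ENNReal.add_sub_cancel_right hφne]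
  -- measurable hull of the zero set
  set N := toMeasurable μ1 {x | f1 x = 0} with hNdef
  have hNmeas : MeasurableSet N := measurableSet_toMeasurable _ _
  have hN1 : μ1 N = 0 := by rw [hNdef, measure_toMeasurable]; exact hz
  have hN0 : β.withDensity f0 N = 0 := hac hN1
  -- measurable density of μ1 with respect to β
  set q := μ1.rnDeriv β with hqdef
  have hq_meas : Measurable q := Measure.measurable_rnDeriv _ _
  have hq : β.withDensity q = μ1 :=
    Measure.withDensity_rnDeriv_eq _ _ (withDensity_absolutelyContinuous β f1)
  -- main sup argument
  rw [withDensity_apply _ hs, ← lintegral_indicator hs, lintegral_def]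
  refine iSup_le fun φ => iSup_le fun hφ => ?_
  -- hφ : ⇑φ ≤ s.indicator f0
  rw [← φ.lintegral_eq_lintegral β]
  set D := {x | t * q x < φ x} with hDdef
  have hDmeas : MeasurableSet D := measurableSet_lt (hq_meas.const_mul t) φ.measurable
  have hDs : D ⊆ s := by
    intro x hx
    by_contra hxs
    have h0 : φ x = 0 := le_antisymm
      (by simpa [Set.indicator_of_notMem hxs] using hφ x) (zero_le)
    rw [hDdef] at hx
    simp only [Set.mem_setOf_eq, h0] at hx
    exact (not_lt_of_ge (zero_le)) hx
  set k := (D \ N).indicator (fun x => φ x / t) with hkdef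
  have hk_le : ∀ x, k x ≤ f1 x := by
    intro x
    rcases em (x ∈ D \ N) with hx | hx
    · have hxs : x ∈ s := hDs hx.1
      have hf1x : f1 x ≠ 0 := fun h0 => hx.2 (subset_toMeasurable _ _ h0)
      have hle : f0 x ≤ t * f1 x := (hsub x hxs).resolve_right hf1x
      have hφx : φ x ≤ f1 x * t := by
        rw [mul_comm]
        exact le_trans (le_trans (hφ x) (le_of_eq (Set.indicator_of_mem hxs f0))) hle
      rw [hkdef, Set.indicator_of_mem hx]
      exact (ENNReal.div_le_iff_le_mul (Or.inl ht0) (Or.inl htop)).mpr hφx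
    · rw [hkdef, Set.indicator_of_notMem hx]
      exact zero_le
  have hk_meas : Measurable k :=
    (φ.measurable.div_const t).indicator (hDmeas.diff hNmeas)
  have hcomp : ∀ᵐ x ∂β, k x ≤ q x := by
    refine ae_le_of_forall_setLIntegral_le_of_sigmaFinite₀ hk_meas.aemeasurable
      fun u hu _ => ?_
    calc ∫⁻ x in u, k x ∂β ≤ ∫⁻ x in u, f1 x ∂β := lintegral_mono fun x => hk_le x
      _ = μ1 u := by rw [hμ1, withDensity_apply _ hu]
      _ = ∫⁻ x in u, q x ∂β := by rw [← hq, withDensity_apply _ hu]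
  have hDN0 : β (D \ N) = 0 := by
    have hae : β {x | ¬ k x ≤ q x} = 0 := by
      have := hcomp
      rw [MeasureTheory.ae_iff] at this
      exact this
    refine measure_mono_null ?_ hae
    intro x hx
    simp only [Set.mem_setOf_eq, not_le]
    rw [hkdef, Set.indicator_of_mem hx]
    have hxD : t * q x < φ x := hx.1
    refine (ENNReal.lt_div_iff_mul_lt (Or.inl ht0) (Or.inl htop)).mpr ?_
    rwa [mul_comm]
  have hbound1 : ∫⁻ x in D ∩ N, φ x ∂β = 0 := by
    refine le_antisymm ?_ (zero_le)
    calc ∫⁻ x in D ∩ N, φ x ∂β ≤ ∫⁻ x in D ∩ N, s.indicator f0 x ∂β :=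
          lintegral_mono fun x => hφ x
      _ = ∫⁻ x in s ∩ (D ∩ N), f0 x ∂β := by
          rw [lintegral_indicator hs, Measure.restrict_restrict hs]
      _ ≤ ∫⁻ x in N, f0 x ∂β :=
          lintegral_mono_set (by intro x hx; exact hx.2.2)
      _ = β.withDensity f0 N := (withDensity_apply _ hNmeas).symm
      _ = 0 := hN0
  have hbound2 : ∫⁻ x in D \ N, φ x ∂β = 0 := setLIntegral_measure_zero _ _ hDN0
  have hbound3 : ∫⁻ x in Dᶜ, φ x ∂β ≤ t * μ1 s := by
    have hpt : ∀ x ∈ Dᶜ, φ x ≤ s.indicator (fun y => t * q y) x := by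
      intro x hx
      by_cases hxs : x ∈ s
      · rw [Set.indicator_of_mem hxs]
        exact le_of_not_gt hx
      · rw [Set.indicator_of_notMem hxs]
        simpa [Set.indicator_of_notMem hxs] using hφ x
    calc ∫⁻ x in Dᶜ, φ x ∂β
        ≤ ∫⁻ x in Dᶜ, s.indicator (fun y => t * q y) x ∂β :=
          setLIntegral_mono ((hq_meas.const_mul t).indicator hs) hpt
      _ ≤ ∫⁻ x, s.indicator (fun y => t * q y) x ∂β := setLIntegral_le_lintegral _ _
      _ = ∫⁻ x in s, t * q x ∂β := lintegral_indicator hs _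
      _ = t * ∫⁻ x in s, q x ∂β := lintegral_const_mul' _ _ htop
      _ = t * μ1 s := by rw [← hq, withDensity_apply _ hs]
  calc ∫⁻ x, φ x ∂β
      = ∫⁻ x in D, φ x ∂β + ∫⁻ x in Dᶜ, φ x ∂β := (lintegral_add_compl _ hDmeas).symm
    _ = (∫⁻ x in D ∩ N, φ x ∂β + ∫⁻ x in D \ N, φ x ∂β) + ∫⁻ x in Dᶜ, φ x ∂β := by
        rw [← lintegral_union (hDmeas.diff hNmeas)
            (Set.disjoint_left.mpr fun x hx1 hx2 => hx2.2 hx1.2), Set.inter_union_diff]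
    _ ≤ t * μ1 s := by
        rw [hbound1, hbound2, zero_add, zero_add]
        exact hbound3

/-- `withDensity` commutes with pushing forward along a measurable equivalence. -/
theorem wd_map_equiv {Y : Type*} [MeasurableSpace Y] (e : X ≃ᵐ Y)
    (μ : Measure X) (g : Y → ℝ≥0∞) :
    (μ.map e).withDensity g = (μ.withDensity (fun x => g (e x))).map e := by
  ext u hu
  rw [withDensity_apply _ hu, Measure.map_apply e.measurable hu,
    Measure.restrict_map e.measurable hu, lintegral_map_equiv,
    withDensity_apply _ (e.measurable hu)]

/-- Product of `withDensity` measures (arbitrary, possibly non-measurable densities). -/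
theorem prod_wd {Xa Xb : Type*} [MeasurableSpace Xa] [MeasurableSpace Xb]
    (μ : Measure Xa) (ν : Measure Xb) [SigmaFinite μ] [SigmaFinite ν]
    (F : Xa → ℝ≥0∞) (G : Xb → ℝ≥0∞) (hF : ∀ x, F x ≠ ∞)
    [IsFiniteMeasure (μ.withDensity F)] [IsFiniteMeasure (ν.withDensity G)] :
    (μ.withDensity F).prod (ν.withDensity G)
      = (μ.prod ν).withDensity (fun p => F p.1 * G p.2) := by
  refine Measure.prod_eq fun s t hs ht => ?_
  rw [withDensity_apply _ (hs.prod ht), withDensity_apply _ hs, withDensity_apply _ ht,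
    ← lintegral_indicator (hs.prod ht), ← lintegral_indicator hs, ← lintegral_indicator ht]
  have hind : ∀ p : Xa × Xb,
      (s ×ˢ t).indicator (fun p : Xa × Xb => F p.1 * G p.2) p
        = s.indicator F p.1 * t.indicator G p.2 := by
    intro p
    by_cases h1 : p.1 ∈ s <;> by_cases h2 : p.2 ∈ t <;>
      simp [Set.indicator_apply, Set.mem_prod, h1, h2]
  simp only [hind]
  have hFfin : ∀ x, s.indicator F x ≠ ∞ := by
    intro x
    by_cases hx : x ∈ s
    · rw [Set.indicator_of_mem hx]; exact hF x
    · rw [Set.indicator_of_notMem hx]; exact ENNReal.zero_ne_top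
  have hBfin : ∫⁻ y, t.indicator G y ∂ν ≠ ∞ := by
    rw [lintegral_indicator ht, ← withDensity_apply _ ht]
    exact measure_ne_top _ _
  apply le_antisymm
  · rw [lintegral_def]
    refine iSup_le fun φ => iSup_le fun hφ => ?_
    rw [← φ.lintegral_eq_lintegral, lintegral_prod _ φ.measurable.aemeasurable]
    have hinner : ∀ x, ∫⁻ y, φ (x, y) ∂ν
        ≤ s.indicator F x * ∫⁻ y, t.indicator G y ∂ν := by
      intro x
      calc ∫⁻ y, φ (x, y) ∂ν ≤ ∫⁻ y, s.indicator F x * t.indicator G y ∂ν :=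
            lintegral_mono fun y => hφ (x, y)
        _ = s.indicator F x * ∫⁻ y, t.indicator G y ∂ν :=
            lintegral_const_mul' _ _ (hFfin x)
    calc ∫⁻ x, ∫⁻ y, φ (x, y) ∂ν ∂μ
        ≤ ∫⁻ x, s.indicator F x * ∫⁻ y, t.indicator G y ∂ν ∂μ :=
          lintegral_mono hinner
      _ = (∫⁻ x, s.indicator F x ∂μ) * ∫⁻ y, t.indicator G y ∂ν :=
          lintegral_mul_const' _ _ hBfin
  · rw [lintegral_def (f := fun x => s.indicator F x),
      lintegral_def (f := fun y => t.indicator G y), ENNReal.iSup_mul]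
    refine iSup_le fun φ => ?_
    rw [ENNReal.iSup_mul]
    refine iSup_le fun hφ => ?_
    rw [ENNReal.mul_iSup]
    refine iSup_le fun ψ => ?_
    rw [ENNReal.mul_iSup]
    refine iSup_le fun hψ => ?_
    rw [← φ.lintegral_eq_lintegral, ← ψ.lintegral_eq_lintegral,
      ← lintegral_prod_mul φ.measurable.aemeasurable ψ.measurable.aemeasurable]
    exact lintegral_mono fun p => mul_le_mul' (hφ p.1) (hψ p.2)

/-- Finite products of `withDensity` measures (arbitrary densities). -/
theorem pi_wd : ∀ (n : ℕ) (ν : Measure ℝ) (f : ℝ → ℝ≥0∞), SigmaFinite ν →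
    (∀ x, f x ≠ ∞) → IsProbabilityMeasure (ν.withDensity f) →
    Measure.pi (fun _ : Fin n => ν.withDensity f)
      = (Measure.pi fun _ : Fin n => ν).withDensity (fun x => ∏ i, f (x i)) := by
  intro n
  induction n with
  | zero =>
    intro ν f hσ hfin hprob
    rw [Measure.pi_of_empty, Measure.pi_of_empty]
    have h1 : (fun x : Fin 0 → ℝ => ∏ i, f (x i)) = fun _ => 1 := by
      funext x; simp
    rw [h1]
    exact withDensity_one.symm
  | succ n ih =>
    intro ν f hσ hfin hprob
    haveI := hσ; haveI := hprob
    set e := MeasurableEquiv.piFinSuccAbove (fun _ : Fin (n + 1) => ℝ) 0 with hedef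
    have h1 : Measure.pi (fun _ : Fin (n + 1) => ν.withDensity f)
        = Measure.map e.symm ((ν.withDensity f).prod
            (Measure.pi fun _ : Fin n => ν.withDensity f)) :=
      (((measurePreserving_piFinSuccAbove (fun _ : Fin (n + 1) => ν.withDensity f) 0).symm
        e).map_eq).symm
    have h2 : Measure.map e.symm (ν.prod (Measure.pi fun _ : Fin n => ν))
        = Measure.pi (fun _ : Fin (n + 1) => ν) :=
      ((measurePreserving_piFinSuccAbove (fun _ : Fin (n + 1) => ν) 0).symm e).map_eq
    haveI : IsFiniteMeasure
        ((Measure.pi fun _ : Fin n => ν).withDensity fun x => ∏ i, f (x i)) := by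
      rw [← ih ν f hσ hfin hprob]; infer_instance
    rw [h1, ih ν f hσ hfin hprob, prod_wd ν _ f _ hfin, ← h2,
      wd_map_equiv e.symm _ (fun x => ∏ i : Fin (n + 1), f (x i))]
    congr 1
    apply withDensity_congr_ae
    refine Filter.Eventually.of_forall fun p => ?_
    show f p.1 * ∏ i : Fin n, f (p.2 i) = ∏ i : Fin (n + 1), f (e.symm p i)
    have hes : e.symm p = Fin.insertNth 0 p.1 p.2 := by
      simp [hedef, MeasurableEquiv.piFinSuccAbove_symm_apply, Fin.insertNthEquiv]
    rw [hes, Fin.prod_univ_succAbove _ (0 : Fin (n + 1))]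
    simp

/-- Projection on the first `n` coordinates. -/
def proj (n : ℕ) : SeqSp → (Fin n → ℝ) := fun ω i => ω (i : ℕ)

/-- Projection on the remaining coordinates. -/
def projC (n : ℕ) : SeqSp → ({ i : ℕ // ¬ i < n } → ℝ) := fun ω j => ω (j : ℕ)

theorem measurable_proj (n : ℕ) : Measurable (proj n) :=
  measurable_pi_lambda _ fun i => measurable_pi_apply _

theorem measurable_projC (n : ℕ) : Measurable (projC n) :=
  measurable_pi_lambda _ fun j => measurable_pi_apply _

theorem comap_proj_eq (n : ℕ) :
    MeasurableSpace.comap (proj n) inferInstance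
      = ⨆ k ∈ {k : ℕ | k < n}, MeasurableSpace.comap (fun ω : SeqSp => ω k)
          inferInstance := by
  have hpi : (inferInstance : MeasurableSpace (Fin n → ℝ))
      = ⨆ i : Fin n, MeasurableSpace.comap (fun x : Fin n → ℝ => x i) inferInstance := rfl
  rw [hpi, MeasurableSpace.comap_iSup]
  simp_rw [MeasurableSpace.comap_comp]
  apply le_antisymm
  · exact iSup_le fun i => le_iSup₂_of_le (i : ℕ) i.isLt le_rfl
  · exact iSup₂_le fun k hk => le_iSup_of_le (⟨k, hk⟩ : Fin n) le_rfl

theorem comap_projC_eq (n : ℕ) :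
    MeasurableSpace.comap (projC n) inferInstance
      = ⨆ k ∈ {k : ℕ | k < n}ᶜ, MeasurableSpace.comap (fun ω : SeqSp => ω k)
          inferInstance := by
  have hpi : (inferInstance : MeasurableSpace ({ i : ℕ // ¬ i < n } → ℝ))
      = ⨆ j : { i : ℕ // ¬ i < n },
          MeasurableSpace.comap (fun x : { i : ℕ // ¬ i < n } → ℝ => x j)
            inferInstance := rfl
  rw [hpi, MeasurableSpace.comap_iSup]
  simp_rw [MeasurableSpace.comap_comp]
  apply le_antisymm
  · exact iSup_le fun j => le_iSup₂_of_le (j : ℕ) j.2 le_rfl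
  · exact iSup₂_le fun k hk => le_iSup_of_le (⟨k, hk⟩ : { i : ℕ // ¬ i < n }) le_rfl

theorem natFilt_eq_comap (n : ℕ) :
    natFilt n = MeasurableSpace.comap (proj n) inferInstance := by
  rw [comap_proj_eq, natFilt]
  apply le_antisymm
  · exact iSup₂_le fun k hk => le_iSup₂_of_le k (Finset.mem_range.mp hk) le_rfl
  · exact iSup₂_le fun k hk => le_iSup₂_of_le k (Finset.mem_range.mpr hk) le_rfl

theorem natFilt_le (n : ℕ) : natFilt n ≤ (inferInstance : MeasurableSpace SeqSp) := by
  rw [natFilt_eq_comap]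
  exact (measurable_proj n).comap_le

theorem natFilt_mono {m n : ℕ} (h : m ≤ n) : natFilt m ≤ natFilt n := by
  rw [natFilt, natFilt]
  exact biSup_mono fun k hk => Finset.mem_range.mpr
    (lt_of_lt_of_le (Finset.mem_range.mp hk) h)

/-- Splitting an infinite sequence into the first `n` coordinates and the rest. -/
def splitAt (n : ℕ) : SeqSp ≃ᵐ (Fin n → ℝ) × ({ i : ℕ // ¬ i < n } → ℝ) where
  toFun ω := (proj n ω, projC n ω)
  invFun p := fun k => if h : k < n then p.1 ⟨k, h⟩ else p.2 ⟨k, h⟩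
  left_inv ω := by
    funext k
    by_cases h : k < n <;> simp [proj, projC, h]
  right_inv p := by
    refine Prod.ext ?_ ?_
    · funext i
      simp only [proj]
      rw [dif_pos i.isLt]
    · funext j
      simp only [projC]
      rw [dif_neg j.2]
  measurable_toFun := (measurable_proj n).prodMk (measurable_projC n)
  measurable_invFun := by
    show Measurable fun p : (Fin n → ℝ) × ({ i : ℕ // ¬ i < n } → ℝ) =>
      (fun k : ℕ => if h : k < n then p.1 ⟨k, h⟩ else p.2 ⟨k, h⟩)
    apply measurable_pi_lambda
    intro k
    by_cases h : k < n
    · simp only [dif_pos h]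
      exact (measurable_pi_apply _).comp measurable_fst
    · simp only [dif_neg h]
      exact (measurable_pi_apply _).comp measurable_snd

theorem map_split_eq_prod (μ : Measure SeqSp) [IsProbabilityMeasure μ]
    (hiid : iIndepFun (fun k (ω : SeqSp) => ω k) μ) (n : ℕ) :
    μ.map (splitAt n) = (μ.map (proj n)).prod (μ.map (projC n)) := by
  have h0 : iIndep (fun k : ℕ => MeasurableSpace.comap (fun ω : SeqSp => ω k)
      inferInstance) μ := hiid.iIndep
  have hle : ∀ k : ℕ, MeasurableSpace.comap (fun ω : SeqSp => ω k) inferInstance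
      ≤ (inferInstance : MeasurableSpace SeqSp) := fun k => (measurable_pi_apply k).comap_le
  have hind := indep_biSup_compl hle h0 {k : ℕ | k < n}
  have hIF : IndepFun (proj n) (projC n) μ := by
    rw [IndepFun_iff_Indep, comap_proj_eq, comap_projC_eq]
    exact hind
  have hmap := (indepFun_iff_map_prod_eq_prod_map_map (measurable_proj n).aemeasurable
    (measurable_projC n).aemeasurable).mp hIF
  rwa [show (fun ω => (proj n ω, projC n ω)) = ⇑(splitAt n) from rfl] at hmap

/-- Inner approximation: a measurable subset of a cylinder over an arbitrary set `Z`
can be controlled by a measurable subset of `Z`. -/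
theorem exists_meas_le (μ : Measure SeqSp) [IsProbabilityMeasure μ]
    (hiid : iIndepFun (fun k (ω : SeqSp) => ω k) μ) (n : ℕ)
    {S : Set SeqSp} (hS : MeasurableSet S) {Z : Set (Fin n → ℝ)}
    (hSZ : S ⊆ proj n ⁻¹' Z) :
    ∃ z : Set (Fin n → ℝ), MeasurableSet z ∧ z ⊆ Z ∧ μ S ≤ (μ.map (proj n)) z := by
  haveI : IsProbabilityMeasure (μ.map (projC n)) :=
    Measure.isProbabilityMeasure_map (measurable_projC n).aemeasurable
  haveI : IsProbabilityMeasure (μ.map (proj n)) :=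
    Measure.isProbabilityMeasure_map (measurable_proj n).aemeasurable
  set e := splitAt n with hedef
  set S' : Set ((Fin n → ℝ) × ({ i : ℕ // ¬ i < n } → ℝ)) := ⇑e.symm ⁻¹' S with hS'def
  have hS'meas : MeasurableSet S' := e.symm.measurable hS
  have hμS : μ S = ((μ.map (proj n)).prod (μ.map (projC n))) S' := by
    rw [← map_split_eq_prod μ hiid n, Measure.map_apply e.measurable hS'meas]
    congr 1
    ext ω
    simp [hS'def]
  set m := fun x => (μ.map (projC n)) (Prod.mk x ⁻¹' S') with hmdef
  have hmmeas : Measurable m := measurable_measure_prodMk_left hS'meas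
  have hzmeas : MeasurableSet {x | m x ≠ 0} :=
    hmmeas (measurableSet_singleton 0).compl
  refine ⟨{x | m x ≠ 0}, hzmeas, ?_, ?_⟩
  · intro x hx
    have hne : (Prod.mk x ⁻¹' S').Nonempty := by
      rcases Set.eq_empty_or_nonempty (Prod.mk x ⁻¹' S') with h | h
      · exact absurd (by rw [hmdef]; simp [h]) hx
      · exact h
    obtain ⟨y, hy⟩ := hne
    have hmem : e.symm (x, y) ∈ S := hy
    have hpr : proj n (e.symm (x, y)) = x := by
      funext i
      show (if h : (i : ℕ) < n then x ⟨i, h⟩ else y ⟨i, h⟩) = x i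
      rw [dif_pos i.isLt]
    have := hSZ hmem
    rwa [Set.mem_preimage, hpr] at this
  · rw [hμS, Measure.prod_apply hS'meas]
    have hsplit : ∫⁻ x, m x ∂(μ.map (proj n))
        = ∫⁻ x in {x | m x ≠ 0}, m x ∂(μ.map (proj n)) := by
      rw [← lintegral_indicator hzmeas]
      congr 1
      funext x
      by_cases hx : m x ≠ 0
      · exact (Set.indicator_of_mem (by exact hx) m).symm
      · push_neg at hx
        have hnot : x ∉ {x | m x ≠ 0} := by simp [hx]
        rw [Set.indicator_of_notMem hnot]
        exact hx
    calc ∫⁻ x, m x ∂(μ.map (proj n))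
        = ∫⁻ x in {x | m x ≠ 0}, m x ∂(μ.map (proj n)) := hsplit
      _ ≤ ∫⁻ _ in {x | m x ≠ 0}, 1 ∂(μ.map (proj n)) :=
          lintegral_mono fun x => prob_le_one
      _ = (μ.map (proj n)) {x | m x ≠ 0} := setLIntegral_one _

/-- The law of the first `n` coordinates is the product law. -/
theorem map_proj_eq_pi (μ : Measure SeqSp) [IsProbabilityMeasure μ] {P : Measure ℝ}
    [IsProbabilityMeasure P] (hiid : IsIIDwithLaw μ P) (n : ℕ) :
    μ.map (proj n) = Measure.pi (fun _ : Fin n => P) := by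
  classical
  refine (Measure.pi_eq fun s hs => ?_).symm
  set s' : ℕ → Set ℝ := fun k => if h : k < n then s ⟨k, h⟩ else Set.univ with hs'def
  have hs'meas : ∀ k, k ∈ Finset.range n → MeasurableSet (s' k) := by
    intro k _
    by_cases h : k < n
    · rw [hs'def]; simp only [dif_pos h]; exact hs _
    · rw [hs'def]; simp only [dif_neg h]; exact MeasurableSet.univ
  have hpre : proj n ⁻¹' Set.pi Set.univ s
      = ⋂ k ∈ Finset.range n, (fun ω : SeqSp => ω k) ⁻¹' s' k := by
    ext ω
    constructor
    · intro h
      simp only [Set.mem_preimage, Set.mem_pi, Set.mem_univ, forall_true_left] at h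
      simp only [Set.mem_iInter, Finset.mem_range]
      intro k hk
      rw [hs'def]
      simp only [dif_pos hk]
      exact h ⟨k, hk⟩
    · intro h
      simp only [Set.mem_iInter, Finset.mem_range] at h
      simp only [Set.mem_preimage, Set.mem_pi, Set.mem_univ, forall_true_left]
      intro i
      have h2 := h (i : ℕ) i.isLt
      rw [hs'def] at h2
      simp only [dif_pos i.isLt] at h2
      exact h2
  rw [Measure.map_apply (measurable_proj n) (MeasurableSet.univ_pi hs), hpre,
    hiid.1.measure_inter_preimage_eq_mul (Finset.range n) hs'meas]
  have hval : ∀ k, μ ((fun ω : SeqSp => ω k) ⁻¹' s' k) = P (s' k) := by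
    intro k
    have hmeask : MeasurableSet (s' k) := by
      by_cases h : k < n
      · rw [hs'def]; simp only [dif_pos h]; exact hs _
      · rw [hs'def]; simp only [dif_neg h]; exact MeasurableSet.univ
    rw [← hiid.2 k, Measure.map_apply (measurable_pi_apply k) hmeask]
  calc ∏ k ∈ Finset.range n, μ ((fun ω : SeqSp => ω k) ⁻¹' s' k)
      = ∏ k ∈ Finset.range n, P (s' k) := Finset.prod_congr rfl fun k _ => hval k
    _ = ∏ i : Fin n, P (s' (i : ℕ)) := (Fin.prod_univ_eq_prod_range (fun k => P (s' k)) n).symm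
    _ = ∏ i : Fin n, P (s i) := by
        refine Finset.prod_congr rfl fun i _ => ?_
        rw [hs'def]
        simp only [dif_pos i.isLt]

/-- Pointwise density comparison from the log-likelihood sum condition. -/
theorem ratio_pointwise {n : ℕ} (p0 p1 : ℝ → ℝ) {γ : ℝ} (hγ : 0 < γ) (x : Fin n → ℝ)
    (hx : ∑ i, Real.log (p0 (x i) / p1 (x i)) < Real.log γ) :
    (∏ i, ENNReal.ofReal (p0 (x i)))
      ≤ ENNReal.ofReal γ * ∏ i, ENNReal.ofReal (p1 (x i))
      ∨ (∏ i, ENNReal.ofReal (p1 (x i))) = 0 := by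
  by_cases hz : ∃ i, p1 (x i) ≤ 0
  · right
    obtain ⟨i, hi⟩ := hz
    exact Finset.prod_eq_zero (Finset.mem_univ i)
      (by simpa [ENNReal.ofReal_eq_zero] using hi)
  · left
    push_neg at hz
    have h1 : ∀ i : Fin n, ENNReal.ofReal (p0 (x i))
        ≤ ENNReal.ofReal (Real.exp (Real.log (p0 (x i) / p1 (x i))))
          * ENNReal.ofReal (p1 (x i)) := by
      intro i
      rcases le_or_gt (p0 (x i)) 0 with h | h
      · simp [ENNReal.ofReal_of_nonpos h]
      · have hexp : Real.exp (Real.log (p0 (x i) / p1 (x i))) = p0 (x i) / p1 (x i) :=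
          Real.exp_log (div_pos h (hz i))
        rw [hexp, ← ENNReal.ofReal_mul (le_of_lt (div_pos h (hz i))),
          div_mul_cancel₀ _ (hz i).ne']
    calc ∏ i, ENNReal.ofReal (p0 (x i))
        ≤ ∏ i, (ENNReal.ofReal (Real.exp (Real.log (p0 (x i) / p1 (x i))))
            * ENNReal.ofReal (p1 (x i))) := Finset.prod_le_prod' fun i _ => h1 i
      _ = (∏ i, ENNReal.ofReal (Real.exp (Real.log (p0 (x i) / p1 (x i)))))
            * ∏ i, ENNReal.ofReal (p1 (x i)) := Finset.prod_mul_distrib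
      _ ≤ ENNReal.ofReal γ * ∏ i, ENNReal.ofReal (p1 (x i)) := by
          apply mul_le_mul_left
          rw [← ENNReal.ofReal_prod_of_nonneg (fun i _ => (Real.exp_pos _).le),
            ← Real.exp_sum]
          refine ENNReal.ofReal_le_ofReal ?_
          rw [← Real.exp_log hγ]
          exact (Real.exp_le_exp.mpr hx.le)

end Stmt1Aux

open Stmt1Aux

/-- change-of-measure inequality for stopping times:
for any `E ∈ 𝓕_T` and `γ > 0`, `P₀(E) - γ P₁(E) ≤ P₀(S_T ≥ log γ)`. -/
theorem stmt_1 (P0 P1 : Measure ℝ) [IsProbabilityMeasure P0] [IsProbabilityMeasure P1]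
    (p0 p1 : ℝ → ℝ)
    (hd0 : P0 = volume.withDensity (fun x => ENNReal.ofReal (p0 x)))
    (hd1 : P1 = volume.withDensity (fun x => ENNReal.ofReal (p1 x)))
    (hac01 : P0 ≪ P1) (hac10 : P1 ≪ P0)
    (μ0 μ1 : Measure SeqSp) [IsProbabilityMeasure μ0] [IsProbabilityMeasure μ1]
    (hiid0 : IsIIDwithLaw μ0 P0) (hiid1 : IsIIDwithLaw μ1 P1)
    (T : SeqSp → ℕ∞) (hT : IsStopTime T)
    (hTfin0 : μ0 {ω | T ω < ⊤} = 1) (hTfin1 : μ1 {ω | T ω < ⊤} = 1)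
    (E : Set SeqSp) (hE : InStoppedSigma T E) (γ : ℝ) (hγ : 0 < γ) :
    (μ0 E).toReal - γ * (μ1 E).toReal
      ≤ (μ0 {ω | Real.log γ ≤ stoppedLLR p0 p1 T ω}).toReal := by
  classical
  have hTn : ∀ n : ℕ, MeasurableSet {ω | T ω ≤ (n : ℕ∞)} := fun n => natFilt_le n _ (hT n)
  have hsetTsucc : ∀ m : ℕ, {ω | T ω = ((m + 1 : ℕ) : ℕ∞)}
      = {ω | T ω ≤ ((m + 1 : ℕ) : ℕ∞)} \ {ω | T ω ≤ (m : ℕ∞)} := by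
    intro m
    ext ω
    simp only [Set.mem_setOf_eq, Set.mem_diff]
    constructor
    · intro h
      refine ⟨le_of_eq h, ?_⟩
      rw [h]
      intro hcon
      exact absurd (Nat.cast_le.mp hcon) (by omega)
    · rintro ⟨h1, h2⟩
      refine le_antisymm h1 ?_
      have h3 : (m : ℕ∞) < T ω := not_le.mp h2
      have h4 : (m : ℕ∞) + 1 ≤ T ω := (ENat.add_one_le_iff (by simp)).mpr h3
      calc ((m + 1 : ℕ) : ℕ∞) = (m : ℕ∞) + 1 := by push_cast; rfl
        _ ≤ T ω := h4
  have hTeqMeas : ∀ n : ℕ, MeasurableSet {ω | T ω = (n : ℕ∞)} := by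
    intro n
    cases n with
    | zero =>
      have h : {ω | T ω = ((0 : ℕ) : ℕ∞)} = {ω | T ω ≤ ((0 : ℕ) : ℕ∞)} := by
        ext ω
        simp only [Set.mem_setOf_eq, Nat.cast_zero, le_zero_iff]
      rw [h]
      exact hTn 0
    | succ m =>
      rw [hsetTsucc m]
      exact (hTn (m + 1)).diff (hTn m)
  have hAnat : ∀ n : ℕ, MeasurableSet[natFilt n] (E ∩ {ω | T ω = (n : ℕ∞)}) := by
    intro n
    cases n with
    | zero =>
      have h : E ∩ {ω | T ω = ((0 : ℕ) : ℕ∞)} = E ∩ {ω | T ω ≤ ((0 : ℕ) : ℕ∞)} := by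
        ext ω
        simp only [Set.mem_inter_iff, Set.mem_setOf_eq, Nat.cast_zero, le_zero_iff]
      rw [h]
      exact hE 0
    | succ m =>
      have h : E ∩ {ω | T ω = ((m + 1 : ℕ) : ℕ∞)}
          = (E ∩ {ω | T ω ≤ ((m + 1 : ℕ) : ℕ∞)}) \ (E ∩ {ω | T ω ≤ (m : ℕ∞)}) := by
        rw [hsetTsucc m]
        ext ω
        constructor
        · rintro ⟨hEω, h1, h2⟩
          exact ⟨⟨hEω, h1⟩, fun hc => h2 hc.2⟩
        · rintro ⟨⟨hEω, h1⟩, h2⟩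
          exact ⟨hEω, h1, fun hc => h2 ⟨hEω, hc⟩⟩
      rw [h]
      exact (hE (m + 1)).diff (natFilt_mono (Nat.le_succ m) _ (hE m))
  have hAmeasN : ∀ n : ℕ, MeasurableSet (E ∩ {ω | T ω = (n : ℕ∞)}) :=
    fun n => natFilt_le n _ (hAnat n)
  set γ' := ENNReal.ofReal γ with hγ'def
  have hγ'0 : γ' ≠ 0 := (ENNReal.ofReal_pos.mpr hγ).ne'
  have hγ'top : γ' ≠ ∞ := ENNReal.ofReal_ne_top
  set R := {ω | Real.log γ ≤ stoppedLLR p0 p1 T ω} with hRdef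
  set W := toMeasurable μ0 R with hWdef
  have hWmeas : MeasurableSet W := measurableSet_toMeasurable _ _
  have hWR : μ0 W = μ0 R := measure_toMeasurable _
  have hκ0 : ∀ n : ℕ, μ0.map (proj n)
      = (Measure.pi fun _ : Fin n => (volume : Measure ℝ)).withDensity
          (fun x => ∏ i, ENNReal.ofReal (p0 (x i))) := by
    intro n
    rw [map_proj_eq_pi μ0 hiid0 n,
      show P0 = volume.withDensity (fun y => ENNReal.ofReal (p0 y)) from hd0]
    exact pi_wd n volume _ inferInstance (fun y => ENNReal.ofReal_ne_top)
      (hd0 ▸ (inferInstance : IsProbabilityMeasure P0))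
  have hκ1 : ∀ n : ℕ, μ1.map (proj n)
      = (Measure.pi fun _ : Fin n => (volume : Measure ℝ)).withDensity
          (fun x => ∏ i, ENNReal.ofReal (p1 (x i))) := by
    intro n
    rw [map_proj_eq_pi μ1 hiid1 n,
      show P1 = volume.withDensity (fun y => ENNReal.ofReal (p1 y)) from hd1]
    exact pi_wd n volume _ inferInstance (fun y => ENNReal.ofReal_ne_top)
      (hd1 ▸ (inferInstance : IsProbabilityMeasure P1))
  have hacn : ∀ n : ℕ, μ0.map (proj n) ≪ μ1.map (proj n) := by
    intro n
    rw [map_proj_eq_pi μ0 hiid0 n, map_proj_eq_pi μ1 hiid1 n]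
    set L : ℝ → ℝ≥0∞ := fun y => if P0.rnDeriv P1 y = ∞ then 0 else P0.rnDeriv P1 y
      with hLdef
    have hLmeas : Measurable L := Measurable.ite
      ((Measure.measurable_rnDeriv P0 P1) (measurableSet_singleton ∞))
      measurable_const (Measure.measurable_rnDeriv P0 P1)
    have hLfin : ∀ y, L y ≠ ∞ := by
      intro y
      rw [hLdef]
      dsimp only
      split_ifs with h
      · exact ENNReal.zero_ne_top
      · exact h
    have hLae : L =ᵐ[P1] P0.rnDeriv P1 := by
      filter_upwards [Measure.rnDeriv_lt_top P0 P1] with y hy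
      rw [hLdef]
      dsimp only
      rw [if_neg hy.ne]
    have hwdL : P1.withDensity L = P0 := by
      rw [withDensity_congr_ae hLae]
      exact Measure.withDensity_rnDeriv_eq _ _ hac01
    have hprob : IsProbabilityMeasure (P1.withDensity L) :=
      hwdL ▸ (inferInstance : IsProbabilityMeasure P0)
    calc Measure.pi (fun _ : Fin n => P0)
        = Measure.pi (fun _ : Fin n => P1.withDensity L) := by rw [hwdL]
      _ = (Measure.pi fun _ : Fin n => P1).withDensity
            (fun x => ∏ i, L (x i)) := pi_wd n P1 L inferInstance hLfin hprob
      _ ≪ Measure.pi (fun _ : Fin n => P1) := withDensity_absolutelyContinuous _ _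
  have key : ∀ n : ℕ,
      μ0 (E ∩ {ω | T ω = (n : ℕ∞)})
        ≤ γ' * μ1 (E ∩ {ω | T ω = (n : ℕ∞)}) + μ0 (W ∩ {ω | T ω = (n : ℕ∞)}) := by
    intro n
    set A := E ∩ {ω | T ω = (n : ℕ∞)} with hAdef
    have hAn : MeasurableSet[natFilt n] A := hAnat n
    have hAmeas : MeasurableSet A := hAmeasN n
    have hAn' : MeasurableSet[MeasurableSpace.comap (proj n) inferInstance] A := by
      rw [← natFilt_eq_comap]
      exact hAn
    obtain ⟨a, hameas, hapre⟩ := MeasurableSpace.measurableSet_comap.mp hAn'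
    set W' := W ∩ {ω | T ω = (n : ℕ∞)} with hW'def
    have hW'meas : MeasurableSet W' := hWmeas.inter (hTeqMeas n)
    set S := A \ W' with hSdef
    have hSmeas : MeasurableSet S := hAmeas.diff hW'meas
    set c := {x : Fin n → ℝ | ∑ i, Real.log (p0 (x i) / p1 (x i)) < Real.log γ}
      with hcdef
    have hSsub : S ⊆ proj n ⁻¹' (a ∩ c) := by
      rintro ω ⟨hωA, hωW'⟩
      have hωa : ω ∈ proj n ⁻¹' a := by rw [hapre]; exact hωA
      refine ⟨hωa, ?_⟩
      show proj n ω ∈ c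
      rw [hcdef]
      simp only [Set.mem_setOf_eq]
      by_contra hge
      push_neg at hge
      have hTω : T ω = (n : ℕ∞) := hωA.2
      have hstop : stoppedLLR p0 p1 T ω = llrSum p0 p1 n ω := by
        rw [stoppedLLR, hTω, ENat.toNat_coe]
      have hsum : llrSum p0 p1 n ω
          = ∑ i : Fin n, Real.log (p0 (proj n ω i) / p1 (proj n ω i)) := by
        rw [llrSum]
        exact (Fin.sum_univ_eq_sum_range _ n).symm
      refine hωW' ⟨subset_toMeasurable μ0 R ?_, hTω⟩
      rw [hRdef]
      show Real.log γ ≤ stoppedLLR p0 p1 T ω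
      rw [hstop, hsum]
      exact hge
    obtain ⟨z, hzmeas, hzsub, hzge⟩ := exists_meas_le μ0 hiid0.1 n hSmeas hSsub
    haveI hp1 : IsProbabilityMeasure (μ1.map (proj n)) :=
      Measure.isProbabilityMeasure_map (measurable_proj n).aemeasurable
    haveI hfin1 : IsFiniteMeasure
        ((Measure.pi fun _ : Fin n => (volume : Measure ℝ)).withDensity
          (fun x => ∏ i, ENNReal.ofReal (p1 (x i)))) := by
      rw [← hκ1 n]
      infer_instance
    have hratio : ∀ x ∈ z,
        (fun x : Fin n → ℝ => ∏ i, ENNReal.ofReal (p0 (x i))) x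
          ≤ γ' * (fun x : Fin n → ℝ => ∏ i, ENNReal.ofReal (p1 (x i))) x
          ∨ (fun x : Fin n → ℝ => ∏ i, ENNReal.ofReal (p1 (x i))) x = 0 :=
      fun x hx => ratio_pointwise p0 p1 hγ x ((hzsub hx).2)
    have hacwd : (Measure.pi fun _ : Fin n => (volume : Measure ℝ)).withDensity
          (fun x => ∏ i, ENNReal.ofReal (p0 (x i)))
        ≪ (Measure.pi fun _ : Fin n => (volume : Measure ℝ)).withDensity
          (fun x => ∏ i, ENNReal.ofReal (p1 (x i))) := by
      rw [← hκ0 n, ← hκ1 n]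
      exact hacn n
    have hM := wd_le_of_ratio (Measure.pi fun _ : Fin n => (volume : Measure ℝ))
      (fun x => ∏ i, ENNReal.ofReal (p0 (x i)))
      (fun x => ∏ i, ENNReal.ofReal (p1 (x i)))
      (fun x => (ENNReal.prod_lt_top fun i _ => ENNReal.ofReal_lt_top).ne)
      hacwd hγ'0 hγ'top hzmeas hratio
    have hchain : μ0 S ≤ γ' * μ1 A := by
      calc μ0 S ≤ (μ0.map (proj n)) z := hzge
        _ = ((Measure.pi fun _ : Fin n => (volume : Measure ℝ)).withDensity
              (fun x => ∏ i, ENNReal.ofReal (p0 (x i)))) z := by rw [hκ0 n]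
        _ ≤ γ' * ((Measure.pi fun _ : Fin n => (volume : Measure ℝ)).withDensity
              (fun x => ∏ i, ENNReal.ofReal (p1 (x i)))) z := hM
        _ ≤ γ' * ((Measure.pi fun _ : Fin n => (volume : Measure ℝ)).withDensity
              (fun x => ∏ i, ENNReal.ofReal (p1 (x i)))) a :=
            mul_le_mul_right (measure_mono fun x hx => (hzsub hx).1) γ'
        _ = γ' * (μ1.map (proj n)) a := by rw [hκ1 n]
        _ = γ' * μ1 A := by
            rw [Measure.map_apply (measurable_proj n) hameas, hapre]
    calc μ0 A = μ0 (A ∩ W') + μ0 S := (measure_inter_add_diff A hW'meas).symm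
      _ ≤ μ0 W' + γ' * μ1 A :=
          add_le_add (measure_mono Set.inter_subset_right) hchain
      _ = γ' * μ1 A + μ0 W' := add_comm _ _
  have hTfin_meas : MeasurableSet {ω | T ω < ⊤} := by
    have h : {ω | T ω < (⊤ : ℕ∞)} = ⋃ n : ℕ, {ω | T ω ≤ (n : ℕ∞)} := by
      ext ω
      simp only [Set.mem_setOf_eq, Set.mem_iUnion]
      constructor
      · intro h
        obtain ⟨k, hk⟩ := WithTop.ne_top_iff_exists.mp h.ne
        exact ⟨k, le_of_eq hk.symm⟩
      · rintro ⟨k, hk⟩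
        exact lt_of_le_of_lt hk (Ne.lt_top (by simp))
    rw [h]
    exact MeasurableSet.iUnion fun n => hTn n
  have htop0 : μ0 {ω | T ω < ⊤}ᶜ = 0 := by
    rw [measure_compl hTfin_meas (measure_ne_top _ _), hTfin0, measure_univ, tsub_self]
  have hcover : E ⊆ (⋃ n : ℕ, E ∩ {ω | T ω = (n : ℕ∞)}) ∪ {ω | T ω < ⊤}ᶜ := by
    intro ω hω
    by_cases h : T ω < ⊤
    · left
      obtain ⟨k, hk⟩ := WithTop.ne_top_iff_exists.mp h.ne
      exact Set.mem_iUnion.mpr ⟨k, hω, hk.symm⟩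
    · right
      exact h
  have hAdisj : Pairwise (Function.onFun Disjoint
      fun n : ℕ => E ∩ {ω | T ω = (n : ℕ∞)}) := by
    intro i j hij
    refine Set.disjoint_left.mpr ?_
    rintro ω ⟨_, hi⟩ ⟨_, hj⟩
    exact hij (by exact_mod_cast (hi.symm.trans hj : ((i : ℕ∞)) = j))
  have hWdisj : Pairwise (Function.onFun Disjoint
      fun n : ℕ => W ∩ {ω | T ω = (n : ℕ∞)}) := by
    intro i j hij
    refine Set.disjoint_left.mpr ?_
    rintro ω ⟨_, hi⟩ ⟨_, hj⟩
    exact hij (by exact_mod_cast (hi.symm.trans hj : ((i : ℕ∞)) = j))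
  have hmain : μ0 E ≤ γ' * μ1 E + μ0 R := by
    have h1 : ∑' n : ℕ, μ1 (E ∩ {ω | T ω = (n : ℕ∞)}) ≤ μ1 E := by
      rw [← measure_iUnion hAdisj fun n => hAmeasN n]
      exact measure_mono (Set.iUnion_subset fun n => Set.inter_subset_left)
    have h2 : ∑' n : ℕ, μ0 (W ∩ {ω | T ω = (n : ℕ∞)}) ≤ μ0 R := by
      rw [← measure_iUnion hWdisj fun n => hWmeas.inter (hTeqMeas n), ← hWR]
      exact measure_mono (Set.iUnion_subset fun n => Set.inter_subset_left)
    calc μ0 E ≤ μ0 ((⋃ n : ℕ, E ∩ {ω | T ω = (n : ℕ∞)}) ∪ {ω | T ω < ⊤}ᶜ) :=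
          measure_mono hcover
      _ ≤ μ0 (⋃ n : ℕ, E ∩ {ω | T ω = (n : ℕ∞)}) + μ0 {ω | T ω < ⊤}ᶜ :=
          measure_union_le _ _
      _ = μ0 (⋃ n : ℕ, E ∩ {ω | T ω = (n : ℕ∞)}) := by rw [htop0, add_zero]
      _ ≤ ∑' n : ℕ, μ0 (E ∩ {ω | T ω = (n : ℕ∞)}) := measure_iUnion_le _
      _ ≤ ∑' n : ℕ, (γ' * μ1 (E ∩ {ω | T ω = (n : ℕ∞)})
            + μ0 (W ∩ {ω | T ω = (n : ℕ∞)})) := ENNReal.tsum_le_tsum key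
      _ = γ' * (∑' n : ℕ, μ1 (E ∩ {ω | T ω = (n : ℕ∞)}))
            + ∑' n : ℕ, μ0 (W ∩ {ω | T ω = (n : ℕ∞)}) := by
          rw [ENNReal.tsum_add, ENNReal.tsum_mul_left]
      _ ≤ γ' * μ1 E + μ0 R := add_le_add (mul_le_mul_right h1 γ') h2
  have hfin : γ' * μ1 E + μ0 R ≠ ∞ :=
    ENNReal.add_ne_top.mpr
      ⟨ENNReal.mul_ne_top hγ'top (measure_ne_top _ _), measure_ne_top _ _⟩
  have hlast := ENNReal.toReal_mono hfin hmain
  rw [ENNReal.toReal_add (ENNReal.mul_ne_top hγ'top (measure_ne_top _ _))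
    (measure_ne_top _ _), ENNReal.toReal_mul, hγ'def,
    ENNReal.toReal_ofReal hγ.le] at hlast
  linarith
end
end

section
/- Let $(\delta_n, T_n)$ be the SPRT with thresholds $\alpha_n = n(D(P_1\|P_0) - c_0/\sqrt{n})$ and $\beta_n = n(D(P_0\|P_1) - c_1/\sqrt{n})$ where $c_1 = -\sqrt{V(P_0\|P_1)}\,\Phi^{-1}(\varepsilon - \eta)$ for some $0 < \eta < \varepsilon < 1$. Assume the third absolute moment of the log-likelihood ratio is finite under $P_0$. Then $P_0(T_n > n) \le \Phi\left(\frac{-c_1}{\sqrt{V(P_0\|P_1)}}\right) + \frac{M}{\sqrt{n}} = \varepsilon - \eta + \frac{M}{\sqrt{n}}$ for a constant $M$ depending only on $P_0, P_1$; in particular $P_0(T_n > n) < \varepsilon$ for all sufficiently large $n$. -/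
open MeasureTheory ProbabilityTheory Real

noncomputable section

/-- for the SPRT with thresholds
`αₙ = n(D(P1‖P0) - c0/√n)`, `βₙ = n(D(P0‖P1) - c1/√n)`, where
`c1 = -√V(P0‖P1) Φ⁻¹(ε-η)` (expressed via `Φ(-c1/√V) = ε - η`), the probability of
stopping after time `n` under `P₀` is at most `Φ(-c1/√V) + M/√n = ε - η + M/√n`, and
in particular it is `< ε` for all sufficiently large `n`.  The Berry–Esseen bound of
Rogozin for the running maximum is taken as the hypothesis `hRog`. -/
theorem stmt_14 (P0 P1 : Measure ℝ) [IsProbabilityMeasure P0] [IsProbabilityMeasure P1]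
    (p0 p1 : ℝ → ℝ)
    (hd0 : P0 = volume.withDensity (fun x => ENNReal.ofReal (p0 x)))
    (hd1 : P1 = volume.withDensity (fun x => ENNReal.ofReal (p1 x)))
    (μ0 : Measure SeqSp) [IsProbabilityMeasure μ0] (hiid0 : IsIIDwithLaw μ0 P0)
    (D01 D10 V01 : ℝ)
    (hD01 : ∫ x, Real.log (p0 x / p1 x) ∂P0 = D01) (hD01pos : 0 < D01)
    (hD10 : ∫ x, Real.log (p1 x / p0 x) ∂P1 = D10) (hD10pos : 0 < D10)
    (hV01 : ∫ x, (Real.log (p0 x / p1 x) - D01) ^ 2 ∂P0 = V01) (hV01pos : 0 < V01)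
    (hmom3 : Integrable (fun x => |Real.log (p0 x / p1 x)| ^ 3) P0)
    (ε η : ℝ) (hη : 0 < η) (hηε : η < ε) (hε : ε < 1)
    (c0 c1 : ℝ) (hc1 : stdGaussCDF (-c1 / Real.sqrt V01) = ε - η)
    (M : ℝ) (hM : 0 ≤ M)
    (hRog : ∀ n : ℕ, ∀ hn : 1 ≤ n, ∀ a : ℝ,
      |(μ0 {ω | ((Finset.Icc 1 n).sup' (Finset.nonempty_Icc.mpr hn)
            (fun k => llrSum p0 p1 k ω) - n * D01) / Real.sqrt (n * V01) ≤ a}).toReal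
        - stdGaussCDF a| ≤ M / Real.sqrt n) :
    (∀ n : ℕ, 1 ≤ n →
      (μ0 {ω | (n : ℕ∞) <
          sprtTime p0 p1 (n * (D10 - c0 / Real.sqrt n)) (n * (D01 - c1 / Real.sqrt n)) ω}).toReal
        ≤ (ε - η) + M / Real.sqrt n) ∧
    ∃ N : ℕ, ∀ n : ℕ, N ≤ n →
      (μ0 {ω | (n : ℕ∞) <
          sprtTime p0 p1 (n * (D10 - c0 / Real.sqrt n)) (n * (D01 - c1 / Real.sqrt n)) ω}).toReal
        < ε := by

  have key : ∀ n : ℕ, 1 ≤ n →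
      (μ0 {ω | (n : ℕ∞) <
          sprtTime p0 p1 (n * (D10 - c0 / Real.sqrt n)) (n * (D01 - c1 / Real.sqrt n)) ω}).toReal
        ≤ (ε - η) + M / Real.sqrt n := by
    intro n hn
    set a : ℝ := -c1 / Real.sqrt V01 with ha
    have hn' : (0 : ℝ) < n := by exact_mod_cast hn
    have hsV : (0 : ℝ) < Real.sqrt V01 := Real.sqrt_pos.mpr hV01pos
    have hsn : (0 : ℝ) < Real.sqrt n := Real.sqrt_pos.mpr hn'
    have hs : (0 : ℝ) < Real.sqrt (n * V01) := Real.sqrt_pos.mpr (by positivity)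
    have hβ : (n : ℝ) * (D01 - c1 / Real.sqrt n) = n * D01 - c1 * Real.sqrt n := by
      have h1 : (n : ℝ) * (D01 - c1 / Real.sqrt n) = n * D01 - c1 * ((n : ℝ) / Real.sqrt n) := by
        ring
      rw [h1, Real.div_sqrt]
    have has : a * Real.sqrt (n * V01) = -c1 * Real.sqrt n := by
      rw [Real.sqrt_mul (le_of_lt hn'), ha]
      field_simp
    have hsub : {ω | (n : ℕ∞) <
          sprtTime p0 p1 (n * (D10 - c0 / Real.sqrt n)) (n * (D01 - c1 / Real.sqrt n)) ω} ⊆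
        {ω | ((Finset.Icc 1 n).sup' (Finset.nonempty_Icc.mpr hn)
            (fun k => llrSum p0 p1 k ω) - n * D01) / Real.sqrt (n * V01) ≤ a} := by
      intro ω hω
      simp only [Set.mem_setOf_eq] at hω ⊢
      rw [div_le_iff₀ hs, has]
      have hsup : (Finset.Icc 1 n).sup' (Finset.nonempty_Icc.mpr hn)
          (fun k => llrSum p0 p1 k ω) ≤ n * (D01 - c1 / Real.sqrt n) := by
        apply Finset.sup'_le
        intro k hk
        rw [Finset.mem_Icc] at hk
        by_contra hnot
        push_neg at hnot
        have hmem : llrSum p0 p1 k ω ∉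
            Set.Icc (-((n : ℝ) * (D10 - c0 / Real.sqrt n))) ((n : ℝ) * (D01 - c1 / Real.sqrt n)) := by
          intro hmem
          exact absurd hmem.2 (not_le.mpr hnot)
        have hle : sprtTime p0 p1 (n * (D10 - c0 / Real.sqrt n))
            (n * (D01 - c1 / Real.sqrt n)) ω ≤ (k : ℕ∞) := by
          exact iInf₂_le k ⟨hk.1, hmem⟩
        have : (n : ℕ∞) < (k : ℕ∞) := lt_of_lt_of_le hω hle
        have : n < k := by exact_mod_cast this
        omega
      rw [hβ] at hsup
      linarith
    have h1 : (μ0 {ω | (n : ℕ∞) <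
          sprtTime p0 p1 (n * (D10 - c0 / Real.sqrt n)) (n * (D01 - c1 / Real.sqrt n)) ω}).toReal
        ≤ (μ0 {ω | ((Finset.Icc 1 n).sup' (Finset.nonempty_Icc.mpr hn)
            (fun k => llrSum p0 p1 k ω) - n * D01) / Real.sqrt (n * V01) ≤ a}).toReal :=
      ENNReal.toReal_mono (measure_ne_top _ _) (measure_mono hsub)
    have h2 := abs_le.mp (hRog n hn a)
    linarith [h2.2]
  refine ⟨key, ?_⟩
  refine ⟨Nat.ceil ((M / η) ^ 2) + 1, fun n hNn => ?_⟩
  have hn : 1 ≤ n := le_trans (Nat.le_add_left 1 _) hNn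
  have hn' : (0 : ℝ) < n := by exact_mod_cast hn
  have hsn : (0 : ℝ) < Real.sqrt n := Real.sqrt_pos.mpr hn'
  have hlt : (M / η) ^ 2 < (n : ℝ) := by
    have h1 : (M / η) ^ 2 ≤ (Nat.ceil ((M / η) ^ 2) : ℝ) := Nat.le_ceil _
    have h2 : (Nat.ceil ((M / η) ^ 2) : ℝ) < (n : ℝ) := by exact_mod_cast hNn
    linarith
  have hMη : M / η < Real.sqrt n := by
    rw [Real.lt_sqrt (by positivity)]
    exact hlt
  have hMsn : M / Real.sqrt n < η := by
    rw [div_lt_iff₀ hsn]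
    calc M = (M / η) * η := by field_simp
    _ < Real.sqrt n * η := by exact mul_lt_mul_of_pos_right hMη hη
    _ = η * Real.sqrt n := mul_comm _ _
  have := key n hn
  linarith
end
end
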